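/- Let n be even and let a, k ∈ ℝ^n with a ≠ 0; let ℓ denote the smallest integer such that a_{ℓ+1} ≠ 0 and let λ = ⌊ℓ/2⌋. Then the n/2 functions J_1, J_2, ..., J_λ, F_{λ+1}, F_{λ+2}, ..., F_{n/2−1}, H are functionally independent on the positive orthant: there exists a point of (0,∞)^n at which their gradients are linearly independent. -/

import Mathlib

/-- Partial derivative `∂f/∂x_i` of a function on `ℝⁿ`. -/
noncomputable def pd {n : ℕ} (f : (Fin n → ℝ) → ℝ) (x : Fin n → ℝ) (i : Fin n) : ℝ :=
  fderiv ℝ f x (Pi.single i 1)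

/-- The log-canonical Poisson bracket
`{f,g}(x) = Σ_{i<j} x_i x_j (∂f/∂x_i ∂g/∂x_j − ∂f/∂x_j ∂g/∂x_i)`. -/
noncomputable def pb {n : ℕ} (f g : (Fin n → ℝ) → ℝ) (x : Fin n → ℝ) : ℝ :=
  ∑ i : Fin n, ∑ j : Fin n,
    if i < j then x i * x j * (pd f x i * pd g x j - pd f x j * pd g x i) else 0

/-- `J_m(x) = (x_1 x_3 ⋯ x_{2m−1})/(x_2 x_4 ⋯ x_{2m})` (1-based; here indices are 0-based,
so the numerator ranges over even indices `< 2m` and the denominator over odd indices `< 2m`). -/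
noncomputable def Jfun {n : ℕ} (m : ℕ) (x : Fin n → ℝ) : ℝ :=
  (∏ i ∈ Finset.univ.filter (fun i : Fin n => i.val < 2*m ∧ Even i.val), x i) /
  (∏ i ∈ Finset.univ.filter (fun i : Fin n => i.val < 2*m ∧ Odd i.val), x i)

/-- `I_m(x) = (x_{2m+2} x_{2m+4} ⋯ x_n)/(x_{2m+1} x_{2m+3} ⋯ x_{n−1})` (1-based; here 0-based:
numerator over odd indices `≥ 2m`, denominator over even indices `≥ 2m`). -/
noncomputable def Ifun {n : ℕ} (m : ℕ) (x : Fin n → ℝ) : ℝ :=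
  (∏ i ∈ Finset.univ.filter (fun i : Fin n => 2*m ≤ i.val ∧ Odd i.val), x i) /
  (∏ i ∈ Finset.univ.filter (fun i : Fin n => 2*m ≤ i.val ∧ Even i.val), x i)

/-- `v_m(x) = a_1 x_1 + ⋯ + a_m x_m` (sum of the first `m` coordinates, 0-based indices `< m`). -/
def vfun {n : ℕ} (a : Fin n → ℝ) (m : ℕ) (x : Fin n → ℝ) : ℝ :=
  ∑ j ∈ Finset.univ.filter (fun j : Fin n => j.val < m), a j * x j

/-- `F_m = v_{2m} I_m`. -/
noncomputable def Ffun {n : ℕ} (a : Fin n → ℝ) (m : ℕ) (x : Fin n → ℝ) : ℝ :=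
  vfun a (2*m) x * Ifun m x

/-- The Hamiltonian `H(x) = Σ_i (a_i x_i + k_i log x_i)`. -/
noncomputable def Hfun {n : ℕ} (a k : Fin n → ℝ) (x : Fin n → ℝ) : ℝ :=
  ∑ i, (a i * x i + k i * Real.log (x i))

open Finset ContinuousLinearMap

private lemma pd_eq {n : ℕ} {f : (Fin n → ℝ) → ℝ} {L : (Fin n → ℝ) →L[ℝ] ℝ} {x : Fin n → ℝ}
    (h : HasFDerivAt f L x) (i : Fin n) : pd f x i = L (Pi.single i 1) := by
  rw [pd, h.fderiv]

private lemma hasFDerivAt_coordProd {n : ℕ} (S : Finset (Fin n)) (x : Fin n → ℝ) :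
    HasFDerivAt (fun y : Fin n → ℝ => ∏ i ∈ S, y i)
      (∑ i ∈ S, (∏ j ∈ S.erase i, x j) • (proj i : (Fin n → ℝ) →L[ℝ] ℝ)) x :=
  HasFDerivAt.finset_prod fun i _ => hasFDerivAt_apply i x

private lemma eval_sum_proj {n : ℕ} (S : Finset (Fin n)) (c : Fin n → ℝ) (j : Fin n) :
    (∑ i ∈ S, c i • (proj i : (Fin n → ℝ) →L[ℝ] ℝ)) (Pi.single j 1) =
      if j ∈ S then c j else 0 := by
  rw [ContinuousLinearMap.sum_apply]
  simp only [ContinuousLinearMap.smul_apply, proj_apply, Pi.single_apply, smul_eq_mul,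
    mul_ite, mul_one, mul_zero]
  simp [Finset.sum_ite_eq]

private lemma eval_sum_proj' {n : ℕ} (S : Finset (Fin n)) (j : Fin n) :
    (∑ i ∈ S, (proj i : (Fin n → ℝ) →L[ℝ] ℝ)) (Pi.single j 1) =
      if j ∈ S then 1 else 0 := by
  have := eval_sum_proj S (fun _ => (1:ℝ)) j
  simpa using this

private lemma hasFDerivAt_ratio {n : ℕ} {P Q : Finset (Fin n)} {x : Fin n → ℝ}
    (hP : ∀ i ∈ P, x i = 1) (hQ : ∀ i ∈ Q, x i = 1) :
    HasFDerivAt (fun y : Fin n → ℝ => (∏ i ∈ P, y i) / (∏ i ∈ Q, y i))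
      ((∑ i ∈ P, (proj i : (Fin n → ℝ) →L[ℝ] ℝ)) - ∑ i ∈ Q, (proj i : (Fin n → ℝ) →L[ℝ] ℝ)) x := by
  have hPx : (∏ i ∈ P, x i) = 1 := Finset.prod_eq_one hP
  have hQx : (∏ i ∈ Q, x i) = 1 := Finset.prod_eq_one hQ
  have hPe : ∀ i : Fin n, (∏ j ∈ P.erase i, x j) = 1 :=
    fun i => Finset.prod_eq_one (fun j hj => hP j (Finset.mem_of_mem_erase hj))
  have hQe : ∀ i : Fin n, (∏ j ∈ Q.erase i, x j) = 1 :=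
    fun i => Finset.prod_eq_one (fun j hj => hQ j (Finset.mem_of_mem_erase hj))
  have h1 := hasFDerivAt_coordProd P x
  have h2 := hasFDerivAt_coordProd Q x
  have h3 : HasFDerivAt (fun y : Fin n → ℝ => (∏ i ∈ Q, y i)⁻¹)
      ((-(((∏ i ∈ Q, x i))^2)⁻¹) •
        (∑ i ∈ Q, (∏ j ∈ Q.erase i, x j) • (proj i : (Fin n → ℝ) →L[ℝ] ℝ))) x :=
    (hasDerivAt_inv (by rw [hQx]; exact one_ne_zero)).comp_hasFDerivAt x h2
  have h4 := h1.mul h3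
  have heq : (fun y : Fin n → ℝ => (∏ i ∈ P, y i) / (∏ i ∈ Q, y i))
      = fun y : Fin n → ℝ => (∏ i ∈ P, y i) * (∏ i ∈ Q, y i)⁻¹ := by
    funext y; rw [div_eq_mul_inv]
  rw [heq]
  refine HasFDerivAt.congr_fderiv h4 ?_
  ext y
  simp only [ContinuousLinearMap.sub_apply, ContinuousLinearMap.add_apply,
    ContinuousLinearMap.smul_apply, ContinuousLinearMap.sum_apply, hPx, hQx]
  simp [hPe, hQe]
  ring

private lemma pd_Jfun {n m : ℕ} {x : Fin n → ℝ}
    (hx : ∀ i : Fin n, i.val < 2*m → x i = 1) (j : Fin n) :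
    pd (Jfun m) x j =
      (if j.val < 2*m ∧ Even j.val then 1 else 0) -
      (if j.val < 2*m ∧ Odd j.val then 1 else 0) := by
  have hP : ∀ i ∈ Finset.univ.filter (fun i : Fin n => i.val < 2*m ∧ Even i.val), x i = 1 := by
    intro i hi; rw [Finset.mem_filter] at hi; exact hx i hi.2.1
  have hQ : ∀ i ∈ Finset.univ.filter (fun i : Fin n => i.val < 2*m ∧ Odd i.val), x i = 1 := by
    intro i hi; rw [Finset.mem_filter] at hi; exact hx i hi.2.1
  have h := hasFDerivAt_ratio hP hQ
  have hJ : Jfun (n := n) m = fun y : Fin n → ℝ =>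
      (∏ i ∈ Finset.univ.filter (fun i : Fin n => i.val < 2*m ∧ Even i.val), y i) /
      (∏ i ∈ Finset.univ.filter (fun i : Fin n => i.val < 2*m ∧ Odd i.val), y i) := rfl
  rw [hJ, pd_eq h j]
  simp [eval_sum_proj', Finset.mem_filter]

private lemma Ifun_eq_one {n m : ℕ} {x : Fin n → ℝ}
    (hx : ∀ i : Fin n, 2*m ≤ i.val → x i = 1) : Ifun m x = 1 := by
  rw [Ifun]
  rw [Finset.prod_eq_one (fun i hi => hx i (Finset.mem_filter.1 hi).2.1),
      Finset.prod_eq_one (fun i hi => hx i (Finset.mem_filter.1 hi).2.1)]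
  norm_num

private lemma hasFDerivAt_vfun {n m : ℕ} (a : Fin n → ℝ) (x : Fin n → ℝ) :
    HasFDerivAt (vfun a m)
      (∑ i ∈ Finset.univ.filter (fun i : Fin n => i.val < m),
        a i • (proj i : (Fin n → ℝ) →L[ℝ] ℝ)) x := by
  have hv : vfun (n := n) a m
      = fun y => ∑ j ∈ Finset.univ.filter (fun j : Fin n => j.val < m), a j * y j := rfl
  rw [hv]
  exact HasFDerivAt.fun_sum fun i _ => (hasFDerivAt_apply i x).const_mul (a i)

private lemma pd_vfun {n m : ℕ} (a : Fin n → ℝ) (x : Fin n → ℝ) (j : Fin n) :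
    pd (vfun a m) x j = if j.val < m then a j else 0 := by
  rw [pd_eq (hasFDerivAt_vfun a x) j]
  rw [eval_sum_proj]
  simp [Finset.mem_filter]

private lemma pd_Ffun {n r : ℕ} (a : Fin n → ℝ) {x : Fin n → ℝ}
    (hx : ∀ i : Fin n, 2*r ≤ i.val → x i = 1) (j : Fin n) :
    pd (Ffun a r) x j = (if j.val < 2*r then a j else 0)
      + vfun a (2*r) x *
        ((if 2*r ≤ j.val ∧ Odd j.val then 1 else 0)
          - (if 2*r ≤ j.val ∧ Even j.val then 1 else 0)) := by
  have hP : ∀ i ∈ Finset.univ.filter (fun i : Fin n => 2*r ≤ i.val ∧ Odd i.val), x i = 1 := by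
    intro i hi; rw [Finset.mem_filter] at hi; exact hx i hi.2.1
  have hQ : ∀ i ∈ Finset.univ.filter (fun i : Fin n => 2*r ≤ i.val ∧ Even i.val), x i = 1 := by
    intro i hi; rw [Finset.mem_filter] at hi; exact hx i hi.2.1
  have hI : HasFDerivAt (Ifun (n := n) r) _ x := hasFDerivAt_ratio hP hQ
  have hv := hasFDerivAt_vfun (m := 2*r) a x
  have hF : HasFDerivAt (Ffun a r) _ x := hv.mul hI
  rw [pd_eq hF j]
  have hI1 : Ifun r x = 1 := Ifun_eq_one hx
  simp only [ContinuousLinearMap.add_apply, ContinuousLinearMap.smul_apply,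
    ContinuousLinearMap.sub_apply, smul_eq_mul, hI1, eval_sum_proj, eval_sum_proj',
    Finset.mem_filter, Finset.mem_univ, true_and]
  ring

private lemma pd_Hfun {n : ℕ} (a k : Fin n → ℝ) {x : Fin n → ℝ} (hx : ∀ i, x i ≠ 0) (j : Fin n) :
    pd (Hfun a k) x j = a j + k j * (x j)⁻¹ := by
  have hterm : ∀ i : Fin n, HasFDerivAt (fun y : Fin n → ℝ => a i * y i + k i * Real.log (y i))
      ((a i + k i * (x i)⁻¹) • (proj i : (Fin n → ℝ) →L[ℝ] ℝ)) x := by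
    intro i
    have h1 : HasFDerivAt (fun y : Fin n → ℝ => a i * y i)
        (a i • (proj i : (Fin n → ℝ) →L[ℝ] ℝ)) x :=
      (hasFDerivAt_apply i x).const_mul (a i)
    have h2 : HasFDerivAt (fun y : Fin n → ℝ => Real.log (y i))
        ((x i)⁻¹ • (proj i : (Fin n → ℝ) →L[ℝ] ℝ)) x :=
      (Real.hasDerivAt_log (hx i)).comp_hasFDerivAt (f := fun y : Fin n → ℝ => y i) x (hasFDerivAt_apply i x)
    have h3 := h1.add (h2.const_mul (k i))
    refine HasFDerivAt.congr_fderiv h3 ?_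
    rw [add_smul, smul_smul]
  have hH : Hfun (n := n) a k = fun y => ∑ i, (a i * y i + k i * Real.log (y i)) := rfl
  have h := HasFDerivAt.fun_sum (u := Finset.univ)
    (A' := fun i => (a i + k i * (x i)⁻¹) • (proj i : (Fin n → ℝ) →L[ℝ] ℝ)) (fun i _ => hterm i)
  rw [hH, pd_eq h j]
  rw [eval_sum_proj]
  simp

set_option maxHeartbeats 1600000 in
/-- Proposition 4.2 of the paper: for even `n = 2N`, `a ≠ 0`, `ℓ` the smallest index with
`a_{ℓ+1} ≠ 0` and `λ = ⌊ℓ/2⌋`, the functions `J_1,…,J_λ, F_{λ+1},…,F_{N−1}, H` are functionally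
independent: there is a point of the positive orthant at which their gradients are linearly
independent. -/
theorem stmt_11 (N : ℕ) (a k : Fin (2*N) → ℝ) (ha : a ≠ 0)
    (ℓ : ℕ) (hℓ : ℓ < 2*N) (hℓ1 : a ⟨ℓ, hℓ⟩ ≠ 0)
    (hℓ0 : ∀ j : Fin (2*N), j.val < ℓ → a j = 0)
    (G : Fin N → (Fin (2*N) → ℝ) → ℝ)
    (hG : ∀ p : Fin N, G p =
      if p.val < ℓ/2 then Jfun (p.val+1)
      else if p.val < N - 1 then Ffun a (p.val+1)
      else Hfun a k) :
    ∃ x : Fin (2*N) → ℝ, (∀ i, 0 < x i) ∧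
      LinearIndependent ℝ (fun p : Fin N => fun i : Fin (2*N) => pd (G p) x i) := by
  classical
  rcases Nat.eq_zero_or_pos N with hN0 | hNpos
  · exact absurd (funext fun i => absurd i.isLt (by first | omega | (simp only [Fin.val_mk]; omega))) ha
  set lm := ℓ / 2 with hlm
  have hlml : 2 * lm ≤ ℓ := by omega
  have hlmu : ℓ ≤ 2 * lm + 1 := by omega
  have hlmN : lm + 1 ≤ N := by omega
  have hNm1lt : N - 1 < N := by omega
  set ℓF : Fin (2*N) := ⟨ℓ, hℓ⟩ with hℓF
  set A : ℕ → ℝ := fun i => if h : i < 2*N then a ⟨i, h⟩ else 0 with hA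
  set K : ℕ → ℝ := fun i => if h : i < 2*N then k ⟨i, h⟩ else 0 with hK
  set cc : ℕ → ℝ := fun r =>
    ∑ j ∈ (Finset.univ.filter (fun j : Fin (2*N) => j.val < 2*r)).erase ℓF, a j with hcc
  have hAl : A ℓ = a ℓF := by simp only [hA]; rw [dif_pos hℓ]
  have hAl0 : A ℓ ≠ 0 := by rw [hAl]; exact hℓ1
  set U : ℝ → Fin N → Fin N → ℝ := fun s p q =>
    if q.val < lm then
      (if p.val < lm then (if q.val ≤ p.val then (-1:ℝ) else 0)
       else if p.val < N-1 then 0 else K (2*q.val+1))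
    else if q.val < N-1 then
      (if p.val < lm then 0
       else if p.val < N-1 then
         (if q.val < p.val then s * (A (2*q.val+3) - A (2*q.val+2))
          else 2*(A ℓ + s * cc (p.val+1)))
       else (A (2*q.val+3) + K (2*q.val+3)) - (A (2*q.val+2) + K (2*q.val+2)))
    else
      (if p.val < lm then 0
       else if p.val < N-1 then s * A ℓ
       else A ℓ + s * K ℓ) with hU
  -- entry lemmas
  have E1 : ∀ s (p q : Fin N), q.val < lm → p.val < lm →
      U s p q = if q.val ≤ p.val then (-1:ℝ) else 0 := by
    intro s p q h1 h2; simp only [hU]; rw [if_pos h1, if_pos h2]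
  have E2 : ∀ s (p q : Fin N), q.val < lm → lm ≤ p.val → p.val < N-1 → U s p q = 0 := by
    intro s p q h1 h2 h3; simp only [hU]; rw [if_pos h1, if_neg (by first | omega | (simp only [Fin.val_mk]; omega)), if_pos h3]
  have E3 : ∀ s (p q : Fin N), q.val < lm → ¬ p.val < N-1 → U s p q = K (2*q.val+1) := by
    intro s p q h1 h2; simp only [hU]; rw [if_pos h1, if_neg (by first | omega | (simp only [Fin.val_mk]; omega)), if_neg h2]
  have E4 : ∀ s (p q : Fin N), lm ≤ q.val → q.val < N-1 → p.val < lm → U s p q = 0 := by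
    intro s p q h1 h2 h3; simp only [hU]; rw [if_neg (by first | omega | (simp only [Fin.val_mk]; omega)), if_pos h2, if_pos h3]
  have E5 : ∀ s (p q : Fin N), lm ≤ q.val → q.val < N-1 → lm ≤ p.val → p.val < N-1 →
      U s p q = if q.val < p.val then s * (A (2*q.val+3) - A (2*q.val+2))
        else 2*(A ℓ + s * cc (p.val+1)) := by
    intro s p q h1 h2 h3 h4; simp only [hU]
    rw [if_neg (by first | omega | (simp only [Fin.val_mk]; omega)), if_pos h2, if_neg (by first | omega | (simp only [Fin.val_mk]; omega)), if_pos h4]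
  have E6 : ∀ s (p q : Fin N), lm ≤ q.val → q.val < N-1 → ¬ p.val < N-1 →
      U s p q = (A (2*q.val+3) + K (2*q.val+3)) - (A (2*q.val+2) + K (2*q.val+2)) := by
    intro s p q h1 h2 h3; simp only [hU]
    rw [if_neg (by first | omega | (simp only [Fin.val_mk]; omega)), if_pos h2, if_neg (by first | omega | (simp only [Fin.val_mk]; omega)), if_neg h3]
  have E7 : ∀ s (p q : Fin N), ¬ q.val < N-1 → p.val < lm → U s p q = 0 := by
    intro s p q h1 h2; simp only [hU]; rw [if_neg (by first | omega | (simp only [Fin.val_mk]; omega)), if_neg h1, if_pos h2]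
  have E8 : ∀ s (p q : Fin N), ¬ q.val < N-1 → lm ≤ p.val → p.val < N-1 → U s p q = s * A ℓ := by
    intro s p q h1 h2 h3; simp only [hU]
    rw [if_neg (by first | omega | (simp only [Fin.val_mk]; omega)), if_neg h1, if_neg (by first | omega | (simp only [Fin.val_mk]; omega)), if_pos h3]
  have E9 : ∀ s (p q : Fin N), ¬ q.val < N-1 → ¬ p.val < N-1 → U s p q = A ℓ + s * K ℓ := by
    intro s p q h1 h2; simp only [hU]
    rw [if_neg (by first | omega | (simp only [Fin.val_mk]; omega)), if_neg h1, if_neg (by first | omega | (simp only [Fin.val_mk]; omega)), if_neg h2]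
  -- continuity of U
  have hUcont : Continuous U := by
    refine continuous_pi fun p => continuous_pi fun q => ?_
    simp only [hU]
    by_cases h1 : q.val < lm
    · simp only [if_pos h1]; exact continuous_const
    · simp only [if_neg h1]
      by_cases h2 : q.val < N-1
      · simp only [if_pos h2]
        by_cases h3 : p.val < lm
        · simp only [if_pos h3]; exact continuous_const
        · simp only [if_neg h3]
          by_cases h4 : p.val < N-1
          · simp only [if_pos h4]
            by_cases h5 : q.val < p.val
            · simp only [if_pos h5]; fun_prop
            · simp only [if_neg h5]; fun_prop
          · simp only [if_neg h4]; exact continuous_const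
      · simp only [if_neg h2]
        by_cases h3 : p.val < lm
        · simp only [if_pos h3]; exact continuous_const
        · simp only [if_neg h3]
          by_cases h4 : p.val < N-1
          · simp only [if_pos h4]; fun_prop
          · simp only [if_neg h4]; fun_prop
  -- linear independence of U 0
  have hU0 : LinearIndependent ℝ (U 0) := by
    rw [Fintype.linearIndependent_iff]
    intro c hc
    have hcq : ∀ q : Fin N, (∑ p, c p * U 0 p q) = 0 := by
      intro q
      have h := congrFun hc q
      simpa using h
    have hcN : c ⟨N-1, hNm1lt⟩ = 0 := by
      have hq1 := hcq ⟨N-1, hNm1lt⟩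
      rw [Finset.sum_eq_single (⟨N-1, hNm1lt⟩ : Fin N)] at hq1
      · rw [E9 0 _ _ (by first | omega | (simp only [Fin.val_mk]; omega)) (by first | omega | (simp only [Fin.val_mk]; omega))] at hq1
        have he : A ℓ + 0 * K ℓ = A ℓ := by ring
        rw [he] at hq1
        exact (mul_eq_zero.1 hq1).resolve_right hAl0
      · intro p _ hne
        have hp : p.val < N-1 := by
          have hlt := p.isLt
          rcases Nat.lt_or_ge p.val (N-1) with h | h
          · exact h
          · exact absurd (Fin.ext (by first | omega | (simp only [Fin.val_mk]; omega))) hne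
        by_cases h2 : p.val < lm
        · rw [E7 0 p _ (by first | omega | (simp only [Fin.val_mk]; omega)) h2, mul_zero]
        · rw [E8 0 p _ (by first | omega | (simp only [Fin.val_mk]; omega)) (by first | omega | (simp only [Fin.val_mk]; omega)) hp, zero_mul, mul_zero]
      · intro h; exact absurd (Finset.mem_univ _) h
    have hmid : ∀ m (hm : m < N), lm ≤ m → m < N-1 → c ⟨m, hm⟩ = 0 := by
      intro m
      induction m using Nat.strong_induction_on with
      | _ m IH =>
        intro hm h1 h2
        have hq := hcq ⟨m, hm⟩
        rw [Finset.sum_eq_single (⟨m, hm⟩ : Fin N)] at hq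
        · rw [E5 0 _ _ h1 h2 h1 h2, if_neg (by first | omega | (simp only [Fin.val_mk]; omega))] at hq
          have he : 2*(A ℓ + 0 * cc (m+1)) = 2 * A ℓ := by ring
          rw [he] at hq
          rcases mul_eq_zero.1 hq with h | h
          · exact h
          · exact absurd h (by intro h'; exact hAl0 (by linarith))
        · intro p _ hne
          by_cases hp1 : p.val < lm
          · rw [E4 0 p _ h1 h2 hp1, mul_zero]
          · by_cases hp2 : p.val < N-1
            · by_cases hp3 : m < p.val
              · rw [E5 0 p _ h1 h2 (by first | omega | (simp only [Fin.val_mk]; omega)) hp2, if_pos (by first | omega | (simp only [Fin.val_mk]; omega)), zero_mul, mul_zero]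
              · have hplt : p.val < m := by
                  rcases Nat.lt_or_ge p.val m with h | h
                  · exact h
                  · exact absurd (Fin.ext (by first | omega | (simp only [Fin.val_mk]; omega))) hne
                have hc0 : c p = 0 := by
                  have h' := IH p.val hplt p.isLt (by first | omega | (simp only [Fin.val_mk]; omega)) hp2
                  simpa using h'
                rw [hc0, zero_mul]
            · have hpe : p = ⟨N-1, hNm1lt⟩ := Fin.ext (by first | omega | (simp only [Fin.val_mk]; omega))
              rw [hpe, hcN, zero_mul]
        · intro h; exact absurd (Finset.mem_univ _) h
    have hSm : ∀ m, m < lm →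
        (∑ p ∈ Finset.univ.filter (fun p : Fin N => m ≤ p.val ∧ p.val < lm), c p) = 0 := by
      intro m hmlm
      have hmN : m < N := by omega
      have hq := hcq ⟨m, hmN⟩
      have hrw : ∀ p : Fin N, c p * U 0 p ⟨m, hmN⟩
          = if m ≤ p.val ∧ p.val < lm then -(c p) else 0 := by
        intro p
        by_cases hp1 : p.val < lm
        · rw [E1 0 p _ (by first | omega | (simp only [Fin.val_mk]; omega)) hp1]
          by_cases h : m ≤ p.val
          · rw [if_pos (by first | omega | (simp only [Fin.val_mk]; omega)), if_pos ⟨h, hp1⟩]; ring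
          · rw [if_neg (by first | omega | (simp only [Fin.val_mk]; omega)), if_neg (by tauto), mul_zero]
        · rw [if_neg (by tauto)]
          by_cases hp2 : p.val < N-1
          · rw [E2 0 p _ (by first | omega | (simp only [Fin.val_mk]; omega)) (by first | omega | (simp only [Fin.val_mk]; omega)) hp2, mul_zero]
          · have hpe : p = ⟨N-1, hNm1lt⟩ := Fin.ext (by first | omega | (simp only [Fin.val_mk]; omega))
            rw [hpe, hcN, zero_mul]
      rw [Finset.sum_congr rfl (fun p _ => hrw p), ← Finset.sum_filter] at hq
      rw [Finset.sum_neg_distrib] at hq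
      exact neg_eq_zero.1 hq
    have hJ0 : ∀ m (hmN : m < N), m < lm → c ⟨m, hmN⟩ = 0 := by
      intro m hmN hmlm
      have h1 := hSm m hmlm
      have hsplitJ : (Finset.univ.filter (fun p : Fin N => m ≤ p.val ∧ p.val < lm))
          = insert (⟨m, hmN⟩ : Fin N)
              (Finset.univ.filter (fun p : Fin N => m+1 ≤ p.val ∧ p.val < lm)) := by
        ext p
        simp only [Finset.mem_filter, Finset.mem_univ, true_and, Finset.mem_insert, Fin.ext_iff]
        omega
      have hnotmem : (⟨m, hmN⟩ : Fin N) ∉ Finset.univ.filter (fun p : Fin N => m+1 ≤ p.val ∧ p.val < lm) := by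
        simp only [Finset.mem_filter, Finset.mem_univ, true_and, Fin.val_mk]; omega
      rw [hsplitJ, Finset.sum_insert hnotmem] at h1
      have h2 : (∑ p ∈ Finset.univ.filter (fun p : Fin N => m+1 ≤ p.val ∧ p.val < lm), c p)
          = 0 := by
        rcases Nat.lt_or_ge (m+1) lm with h | h
        · exact hSm (m+1) h
        · have hemp : Finset.univ.filter (fun p : Fin N => m+1 ≤ p.val ∧ p.val < lm) = ∅ := by
            apply Finset.eq_empty_of_forall_notMem
            intro p hp; rw [Finset.mem_filter] at hp; omega
          rw [hemp, Finset.sum_empty]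
      rw [h2, add_zero] at h1
      exact h1
    intro p
    by_cases hp1 : p.val < lm
    · have h' := hJ0 p.val p.isLt hp1; simpa using h'
    · by_cases hp2 : p.val < N-1
      · have h' := hmid p.val p.isLt (by first | omega | (simp only [Fin.val_mk]; omega)) hp2; simpa using h'
      · have hpe : p = ⟨N-1, hNm1lt⟩ := Fin.ext (by first | omega | (simp only [Fin.val_mk]; omega))
        rw [hpe]; exact hcN
  -- choose s > 0 with U s linearly independent
  obtain ⟨ε, hε, hball⟩ := Metric.isOpen_iff.1
    ((isOpen_setOf_linearIndependent (𝕜 := ℝ) (ι := Fin N)).preimage hUcont) 0 hU0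
  set s : ℝ := ε/2 with hsdef
  have hs0 : (0:ℝ) < s := by rw [hsdef]; linarith
  have hLI : LinearIndependent ℝ (U s) := by
    have : s ∈ Metric.ball (0:ℝ) ε := by
      rw [Metric.mem_ball, Real.dist_eq, sub_zero, abs_of_pos hs0, hsdef]; linarith
    exact hball this
  set t : ℝ := s⁻¹ with htdef
  have ht0 : 0 < t := by rw [htdef]; exact inv_pos.2 hs0
  have hts : t * s = 1 := by rw [htdef]; field_simp
  have hti : t⁻¹ = s := by rw [htdef, inv_inv]
  set x : Fin (2*N) → ℝ := fun i => if i.val = ℓ then t else 1 with hxdef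
  have hx1 : ∀ i : Fin (2*N), i.val ≠ ℓ → x i = 1 := by
    intro i h; simp only [hxdef]; rw [if_neg h]
  have hxl : x ℓF = t := by simp [hxdef, hℓF]
  have hxpos : ∀ i, 0 < x i := by
    intro i; simp only [hxdef]; split_ifs; exacts [ht0, one_pos]
  have hV : ∀ r : ℕ, ℓ < 2*r → vfun a (2*r) x = a ℓF * t + cc r := by
    intro r hr
    have hmem : ℓF ∈ Finset.univ.filter (fun j : Fin (2*N) => j.val < 2*r) := by
      simp only [Finset.mem_filter, Finset.mem_univ, true_and, hℓF, Fin.val_mk]; exact hr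
    rw [vfun, ← Finset.add_sum_erase _ _ hmem, hxl]
    congr 1
    rw [hcc]
    apply Finset.sum_congr rfl
    intro j hj
    have hjne : j.val ≠ ℓ := fun he => (Finset.ne_of_mem_erase hj) (Fin.ext he)
    rw [hx1 j hjne, mul_one]
  refine ⟨x, hxpos, ?_⟩
  rw [Fintype.linearIndependent_iff]
  intro c hc
  have hcomp : ∀ i : Fin (2*N), (∑ p, c p * pd (G p) x i) = 0 := by
    intro i
    have h := congrFun hc i
    simpa using h
  set c' : Fin N → ℝ := fun p => if lm ≤ p.val ∧ p.val < N-1 then c p * t else c p with hc'def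
  have hkey : ∀ q : Fin N, (∑ p, c' p * U s p q) = 0 := by
    intro q
    have CATCH : True := trivial
    by_cases hq1 : q.val < lm
    · have hjlt : 2*q.val+1 < 2*N := by omega
      have hterm : ∀ p : Fin N, c' p * U s p q = c p * pd (G p) x ⟨2*q.val+1, hjlt⟩ := by
        intro p
        by_cases hp1 : p.val < lm
        · have hgp : G p = Jfun (p.val+1) := by rw [hG p, if_pos hp1]
          have hc'p : c' p = c p := by simp only [hc'def]; rw [if_neg (by omega)]
          rw [E1 s p q hq1 hp1, hgp,
            pd_Jfun (fun i hi => hx1 i (by omega)) ⟨2*q.val+1, hjlt⟩, hc'p]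
          simp only [Fin.val_mk, Nat.even_iff, Nat.odd_iff]
          split_ifs <;> first | ring1 | (exfalso; omega)
        · by_cases hp2 : p.val < N-1
          · have hgp : G p = Ffun a (p.val+1) := by rw [hG p, if_neg hp1, if_pos hp2]
            rw [E2 s p q hq1 (by omega) hp2, hgp,
              pd_Ffun a (fun i hi => hx1 i (by omega)) ⟨2*q.val+1, hjlt⟩,
              hℓ0 ⟨2*q.val+1, hjlt⟩ (by simp only [Fin.val_mk]; omega)]
            simp only [Fin.val_mk, Nat.even_iff, Nat.odd_iff]
            split_ifs <;> first | ring1 | (exfalso; omega)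
          · have hgp : G p = Hfun a k := by rw [hG p, if_neg hp1, if_neg hp2]
            have hc'p : c' p = c p := by simp only [hc'def]; rw [if_neg (by omega)]
            have hKv : K (2*q.val+1) = k ⟨2*q.val+1, hjlt⟩ := by
              simp only [hK]; rw [dif_pos hjlt]
            rw [E3 s p q hq1 hp2, hgp,
              pd_Hfun a k (fun i => (hxpos i).ne') ⟨2*q.val+1, hjlt⟩, hc'p,
              hℓ0 ⟨2*q.val+1, hjlt⟩ (by simp only [Fin.val_mk]; omega),
              hx1 ⟨2*q.val+1, hjlt⟩ (by simp only [Fin.val_mk]; omega), hKv]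
            norm_num
      rw [Finset.sum_congr rfl (fun p _ => hterm p)]
      exact hcomp _
    · by_cases hq2 : q.val < N-1
      · have h1lt : 2*q.val+3 < 2*N := by omega
        have h0lt : 2*q.val+2 < 2*N := by omega
        have hA1 : A (2*q.val+3) = a ⟨2*q.val+3, h1lt⟩ := by simp only [hA]; rw [dif_pos h1lt]
        have hA0 : A (2*q.val+2) = a ⟨2*q.val+2, h0lt⟩ := by simp only [hA]; rw [dif_pos h0lt]
        have hK1 : K (2*q.val+3) = k ⟨2*q.val+3, h1lt⟩ := by simp only [hK]; rw [dif_pos h1lt]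
        have hK0 : K (2*q.val+2) = k ⟨2*q.val+2, h0lt⟩ := by simp only [hK]; rw [dif_pos h0lt]
        have hterm : ∀ p : Fin N, c' p * U s p q
            = c p * (pd (G p) x ⟨2*q.val+3, h1lt⟩ - pd (G p) x ⟨2*q.val+2, h0lt⟩) := by
          intro p
          by_cases hp1 : p.val < lm
          · have hgp : G p = Jfun (p.val+1) := by rw [hG p, if_pos hp1]
            rw [E4 s p q (by omega) hq2 hp1, hgp,
              pd_Jfun (fun i hi => hx1 i (by omega)) ⟨2*q.val+3, h1lt⟩,
              pd_Jfun (fun i hi => hx1 i (by omega)) ⟨2*q.val+2, h0lt⟩]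
            simp only [Fin.val_mk, Nat.even_iff, Nat.odd_iff]
            split_ifs <;> first | ring1 | (exfalso; omega)
          · by_cases hp2 : p.val < N-1
            · have hgp : G p = Ffun a (p.val+1) := by rw [hG p, if_neg hp1, if_pos hp2]
              have hVp : vfun a (2*(p.val+1)) x = a ℓF * t + cc (p.val+1) :=
                hV (p.val+1) (by omega)
              have hc'p : c' p = c p * t := by
                simp only [hc'def]; rw [if_pos ⟨by omega, hp2⟩]
              rw [E5 s p q (by omega) hq2 (by omega) hp2, hgp,
                pd_Ffun a (fun i hi => hx1 i (by omega)) ⟨2*q.val+3, h1lt⟩,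
                pd_Ffun a (fun i hi => hx1 i (by omega)) ⟨2*q.val+2, h0lt⟩, hVp, hc'p,
                hAl, hA1, hA0]
              simp only [Fin.val_mk, Nat.even_iff, Nat.odd_iff]
              split_ifs <;>
                first
                  | ring1
                  | linear_combination (c p * (a ⟨2*q.val+3, h1lt⟩ - a ⟨2*q.val+2, h0lt⟩)) * hts
                  | linear_combination (2 * c p * cc (p.val+1)) * hts
                  | (exfalso; omega)
            · have hgp : G p = Hfun a k := by rw [hG p, if_neg hp1, if_neg hp2]
              have hc'p : c' p = c p := by simp only [hc'def]; rw [if_neg (by omega)]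
              rw [E6 s p q (by omega) hq2 hp2, hgp,
                pd_Hfun a k (fun i => (hxpos i).ne') ⟨2*q.val+3, h1lt⟩,
                pd_Hfun a k (fun i => (hxpos i).ne') ⟨2*q.val+2, h0lt⟩, hc'p,
                hx1 ⟨2*q.val+3, h1lt⟩ (by simp only [Fin.val_mk]; omega),
                hx1 ⟨2*q.val+2, h0lt⟩ (by simp only [Fin.val_mk]; omega),
                hA1, hA0, hK1, hK0]
              norm_num
        rw [Finset.sum_congr rfl (fun p _ => hterm p)]
        simp only [mul_sub]
        rw [Finset.sum_sub_distrib, hcomp, hcomp, sub_zero]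
      · have hterm : ∀ p : Fin N, c' p * U s p q = c p * pd (G p) x ℓF := by
          intro p
          by_cases hp1 : p.val < lm
          · have hgp : G p = Jfun (p.val+1) := by rw [hG p, if_pos hp1]
            rw [E7 s p q hq2 hp1, hgp,
              pd_Jfun (fun i hi => hx1 i (by omega)) ℓF]
            have hlv : (ℓF : Fin (2*N)).val = ℓ := rfl
            rw [hlv]
            simp only [Fin.val_mk, Nat.even_iff, Nat.odd_iff]
            split_ifs <;> first | ring1 | (exfalso; omega)
          · by_cases hp2 : p.val < N-1
            · have hgp : G p = Ffun a (p.val+1) := by rw [hG p, if_neg hp1, if_pos hp2]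
              have hc'p : c' p = c p * t := by
                simp only [hc'def]; rw [if_pos ⟨by omega, hp2⟩]
              rw [E8 s p q hq2 (by omega) hp2, hgp,
                pd_Ffun a (fun i hi => hx1 i (by omega)) ℓF, hc'p, hAl]
              have hlv : (ℓF : Fin (2*N)).val = ℓ := rfl
              rw [hlv]
              simp only [Nat.even_iff, Nat.odd_iff]
              split_ifs <;>
                first
                  | ring1
                  | linear_combination (c p * a ℓF) * hts
                  | (exfalso; omega)
            · have hgp : G p = Hfun a k := by rw [hG p, if_neg hp1, if_neg hp2]
              have hc'p : c' p = c p := by simp only [hc'def]; rw [if_neg (by omega)]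
              have hKl : K ℓ = k ℓF := by simp only [hK]; rw [dif_pos hℓ]
              rw [E9 s p q hq2 hp2, hgp,
                pd_Hfun a k (fun i => (hxpos i).ne') ℓF, hc'p, hxl, hti, hAl, hKl]
              ring
        rw [Finset.sum_congr rfl (fun p _ => hterm p)]
        exact hcomp _
  have hsum0 : (∑ p, c' p • U s p) = 0 := by
    funext q
    have h := hkey q
    simpa using h
  have hz : ∀ p, c' p = 0 := Fintype.linearIndependent_iff.1 hLI c' hsum0
  intro p
  have h := hz p
  simp only [hc'def] at h
  by_cases hp : lm ≤ p.val ∧ p.val < N-1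
  · rw [if_pos hp] at h
    rcases mul_eq_zero.1 h with h' | h'
    · exact h'
    · exact absurd h' (ne_of_gt ht0)
  · rwa [if_neg hp] at h
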